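/- Let e be idempotent modulo m, a, b ∈ R_m^e with a ≡ b^i (mod m) for some i ≥ 1, let ind denote the least such i, and k ≥ 1. Then gcd(k, |b|_m) divides ind if and only if a^(|b|_m / gcd(k, |b|_m)) is idempotent modulo m. -/
import Mathlib


/-- `e` is an idempotent residue modulo `m`: `e^2 ≡ e (mod m)`. -/
def Idem (m : ℕ) (e : ZMod m) : Prop := e ^ 2 = e

/-- The order `|a|_m`: the least `n ≥ 1` such that `a^n` is idempotent mod `m`. -/
noncomputable def ord (m : ℕ) (a : ZMod m) : ℕ := sInf {n | 1 ≤ n ∧ Idem m (a ^ n)}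

/-- `a` is regular modulo `m`: `a^(|a|_m + 1) ≡ a (mod m)`. -/
noncomputable def Reg (m : ℕ) (a : ZMod m) : Prop := a ^ (ord m a + 1) = a

/-- `R_m^e`: the regular residues mod `m` whose idempotent power is `e`. -/
noncomputable def Rme (m : ℕ) (e : ZMod m) : Set (ZMod m) :=
  {a | Reg m a ∧ a ^ (ord m a) = e}

/-- The orbit of `a` modulo `m`: `{a^j mod m : 1 ≤ j ≤ |a|_m}`. -/
noncomputable def orb (m : ℕ) (a : ZMod m) : Finset (ZMod m) :=
  (Finset.Icc 1 (ord m a)).image (a ^ ·)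

lemma pow_period {m : ℕ} (b : ZMod m) {s d : ℕ} (h : b ^ s = b ^ (s + d)) :
    ∀ n, s ≤ n → b ^ (n + d) = b ^ n := by
  intro n hn
  obtain ⟨c, rfl⟩ := Nat.exists_eq_add_of_le hn
  rw [show s + c + d = c + (s + d) by ring, pow_add, ← h, ← pow_add,
    Nat.add_comm c s]

lemma pow_period_mul {m : ℕ} (b : ZMod m) {s d : ℕ} (h : b ^ s = b ^ (s + d)) :
    ∀ q n, s ≤ n → b ^ (n + q * d) = b ^ n := by
  intro q
  induction q with
  | zero => intro n hn; rw [Nat.zero_mul, Nat.add_zero]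
  | succ q ih =>
    intro n hn
    rw [show n + (q + 1) * d = (n + d) + q * d by ring,
      ih _ (le_trans hn (Nat.le_add_right _ _)), pow_period b h n hn]

lemma exists_idem_pow (m : ℕ) (hm : 1 ≤ m) (b : ZMod m) :
    ∃ n, 1 ≤ n ∧ Idem m (b ^ n) := by
  haveI : NeZero m := ⟨by omega⟩
  obtain ⟨i, j, hij, hfij⟩ := Finite.exists_ne_map_eq_of_infinite
    (fun i : ℕ => b ^ (i + 1))
  wlog hlt : i < j generalizing i j
  · exact this j i hij.symm hfij.symm (by omega)
  have hfij2 : b ^ (i + 1) = b ^ (j + 1) := hfij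
  set s := i + 1 with hs
  set d := j - i with hd
  have hd1 : 1 ≤ d := by omega
  have h : b ^ s = b ^ (s + d) := by rw [show s + d = j + 1 by omega]; exact hfij2
  refine ⟨s * d, Nat.one_le_iff_ne_zero.mpr (by positivity), ?_⟩
  have h2 : b ^ (s * d + s * d) = b ^ (s * d) :=
    pow_period_mul b h s (s * d) (Nat.le_mul_of_pos_right s hd1)
  unfold Idem
  rw [← pow_mul]
  rw [show s * d * 2 = s * d + s * d by ring, h2]

/-- For `a, b ∈ R_m^e` with `a` in the orbit of `b`, `ind` the least `i ≥ 1` with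
`b^i ≡ a`, and `k ≥ 1`: `gcd(k,|b|_m) ∣ ind` iff `a^(|b|_m/gcd(k,|b|_m))` is
idempotent mod `m`. -/
theorem gcd_dvd_ind_iff (m : ℕ) (hm : 1 ≤ m) (e : ZMod m) (he : Idem m e)
    (a b : ZMod m) (ha : a ∈ Rme m e) (hb : b ∈ Rme m e)
    (hex : ∃ i, 1 ≤ i ∧ b ^ i = a)
    (ind : ℕ) (hind : ind = sInf {i | 1 ≤ i ∧ b ^ i = a})
    (k : ℕ) (hk : 1 ≤ k) :
    Nat.gcd k (ord m b) ∣ ind ↔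
      Idem m (a ^ (ord m b / Nat.gcd k (ord m b))) := by
  set t := ord m b with htdef
  have hS : {n | 1 ≤ n ∧ Idem m (b ^ n)}.Nonempty := by
    obtain ⟨n, hn⟩ := exists_idem_pow m hm b
    exact ⟨n, hn⟩
  have htmem : 1 ≤ t ∧ Idem m (b ^ t) := Nat.sInf_mem hS
  have ht1 : 1 ≤ t := htmem.1
  have hreg : b ^ (t + 1) = b := hb.1
  -- period t
  have hper : ∀ n, 1 ≤ n → b ^ (n + t) = b ^ n := by
    intro n hn
    obtain ⟨c, rfl⟩ := Nat.exists_eq_add_of_le hn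
    rw [show 1 + c + t = c + (t + 1) by ring, pow_add, hreg, ← pow_succ,
      Nat.add_comm]
  have h1 : b ^ 1 = b ^ (1 + t) := (hper 1 le_rfl).symm
  have hmul : ∀ q n, 1 ≤ n → b ^ (n + q * t) = b ^ n :=
    fun q n hn => pow_period_mul b h1 q n hn
  -- characterization
  have hchar : ∀ n, 1 ≤ n → (Idem m (b ^ n) ↔ t ∣ n) := by
    intro n hn
    constructor
    · intro hid
      by_contra hnd
      set r := n % t with hrdef
      have hr0 : r ≠ 0 := fun h => hnd (Nat.dvd_of_mod_eq_zero h)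
      have hr1 : 1 ≤ r := Nat.one_le_iff_ne_zero.mpr hr0
      have hrt : r < t := Nat.mod_lt n (by omega)
      obtain ⟨qq, hq⟩ : ∃ q, n = r + q * t := ⟨n / t, (Nat.mod_add_div' n t).symm⟩
      have hbn : b ^ n = b ^ r := by
        rw [hq]; exact hmul _ _ hr1
      have hb2n : b ^ (n * 2) = b ^ (r * 2) := by
        rw [show n * 2 = r * 2 + (qq * 2) * t by rw [hq]; ring]
        exact hmul _ _ (by omega)
      have hidr : Idem m (b ^ r) := by
        unfold Idem at hid ⊢
        rw [← pow_mul] at hid ⊢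
        rw [← hb2n, hid, hbn]
      have : t ≤ r := Nat.sInf_le ⟨hr1, hidr⟩
      omega
    · rintro ⟨q, rfl⟩
      obtain ⟨q', rfl⟩ : ∃ q', q = q' + 1 := by
        refine ⟨q - 1, ?_⟩
        have hq0 : q ≠ 0 := by rintro rfl; simp at hn
        omega
      have : b ^ (t * (q' + 1)) = b ^ t := by
        rw [show t * (q' + 1) = t + q' * t by ring]
        exact hmul _ _ ht1
      rw [this]; exact htmem.2
  -- ind
  have hindmem : 1 ≤ ind ∧ b ^ ind = a := by
    rw [hind]; exact Nat.sInf_mem hex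
  set g := Nat.gcd k t with hgdef
  have hg1 : 1 ≤ g := Nat.gcd_pos_of_pos_left t hk
  have hgt : g ∣ t := Nat.gcd_dvd_right k t
  have hn0 : 1 ≤ t / g := Nat.one_le_div_iff hg1 |>.mpr (Nat.le_of_dvd (by omega) hgt)
  have hat : a ^ (t / g) = b ^ (ind * (t / g)) := by
    rw [← hindmem.2, pow_mul]
  have hpos : 1 ≤ ind * (t / g) := Nat.mul_pos hindmem.1 hn0
  rw [hat, hchar _ hpos]
  have htgg : g * (t / g) = t := Nat.mul_div_cancel' hgt
  constructor
  · intro hdvd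
    obtain ⟨c, hc⟩ := hdvd
    refine ⟨c, ?_⟩
    calc ind * (t / g) = g * (t / g) * c := by rw [hc]; ring
      _ = t * c := by rw [htgg]
  · intro hdvd
    have h2 : g * (t / g) ∣ ind * (t / g) := by rw [htgg]; exact hdvd
    exact (Nat.mul_dvd_mul_iff_right (by omega : 0 < t / g)).mp h2
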